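/- Let λ_h > 0 with λ_h → 0, let α > 0, and let the weighted ℓ²-type space W = {(a_γ)_{γ∈Γ} : Σ_γ a_γ² + Σ_γ (Σ_h γ(h) λ_h^{−α}) a_γ² < ∞}, where Γ is the set of finitely supported functions γ : ℕ → ℕ∪{0}. Then the inclusion W ↪ ℓ²(Γ) is a compact operator. -/

import Mathlib

open Filter
lemma finite_low_weight (lam : ℕ → ℝ) (hlampos : ∀ k, 0 < lam k)
    (hlam0 : Tendsto lam atTop (nhds 0)) (α : ℝ) (hα : 0 < α) (N : ℝ) :
    {γ : ℕ →₀ ℕ | (∑ h ∈ γ.support, (γ h : ℝ) * lam h ^ (-α)) ≤ N}.Finite := by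
  classical
  have hto : Tendsto (fun h => lam h ^ (-α)) atTop atTop := by
    have h1 : Tendsto (fun h => lam h ^ α) atTop (nhdsWithin 0 (Set.Ioi 0)) := by
      apply tendsto_nhdsWithin_of_tendsto_nhds_of_eventually_within
      · have h2 := ((Real.continuousAt_rpow_const 0 α (Or.inr hα.le)).tendsto).comp hlam0
        rwa [Function.comp_def, Real.zero_rpow hα.ne'] at h2
      · exact Eventually.of_forall fun h => Real.rpow_pos_of_pos (hlampos h) α
    have h3 := h1.inv_tendsto_nhdsGT_zero
    refine h3.congr fun h => ?_
    simp [Real.rpow_neg (hlampos h).le]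
  obtain ⟨H, hH⟩ := eventually_atTop.mp (hto.eventually_gt_atTop N)
  set μ : ℕ →₀ ℕ := Finsupp.indicator (Finset.range H) (fun h _ => ⌈N * lam h ^ α⌉₊) with hμ
  apply (Set.finite_Iic μ).subset
  intro γ hγ
  simp only [Set.mem_setOf_eq] at hγ
  have hterm : ∀ h ∈ γ.support, (γ h : ℝ) * lam h ^ (-α) ≤ N := by
    intro h hh
    exact le_trans (Finset.single_le_sum (f := fun h => (γ h : ℝ) * lam h ^ (-α))
      (fun i _ => mul_nonneg (Nat.cast_nonneg _) (Real.rpow_nonneg (hlampos i).le _)) hh) hγ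
  rw [Set.mem_Iic]
  rw [Finsupp.le_iff]
  intro h hh
  have h1le : (1 : ℝ) ≤ (γ h : ℝ) := by
    have := Finsupp.mem_support_iff.mp hh
    exact_mod_cast Nat.one_le_iff_ne_zero.mpr this
  have hpos : 0 < lam h ^ (-α) := Real.rpow_pos_of_pos (hlampos h) _
  have hlt : h < H := by
    by_contra hge
    have := hH h (le_of_not_gt hge)
    have h2 : lam h ^ (-α) ≤ (γ h : ℝ) * lam h ^ (-α) := le_mul_of_one_le_left hpos.le h1le
    linarith [hterm h hh]
  have hμh : μ h = ⌈N * lam h ^ α⌉₊ := by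
    rw [hμ, Finsupp.indicator_apply, dif_pos (Finset.mem_range.mpr hlt)]
  rw [hμh]
  have hle : (γ h : ℝ) ≤ N * lam h ^ α := by
    have h2 := hterm h hh
    have hpa : 0 < lam h ^ α := Real.rpow_pos_of_pos (hlampos h) _
    rw [Real.rpow_neg (hlampos h).le] at h2
    calc (γ h : ℝ) = (γ h : ℝ) * (lam h ^ α)⁻¹ * lam h ^ α := by field_simp
    _ ≤ N * lam h ^ α := mul_le_mul_of_nonneg_right h2 hpa.le
  calc γ h = ⌈((γ h : ℕ) : ℝ)⌉₊ := (Nat.ceil_natCast _).symm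
  _ ≤ ⌈N * lam h ^ α⌉₊ := Nat.ceil_mono hle


/-- the weighted sequence space
`W = {a : Γ → ℝ | Σ_γ a_γ² + Σ_γ (Σ_h γ(h) λ_h^{-α}) a_γ² < ∞}` over the set `Γ = ℕ →₀ ℕ`
of finitely supported multi-indices embeds compactly into `ℓ²(Γ)`, when `λ_h → 0` and `α > 0`:
every sequence bounded in the `W`-norm has a subsequence converging in `ℓ²(Γ)`. -/
theorem stmt_6
    (lam : ℕ → ℝ) (hlampos : ∀ k, 0 < lam k)
    (hlam0 : Tendsto lam atTop (nhds 0))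
    (α : ℝ) (hα : 0 < α)
    (a : ℕ → (ℕ →₀ ℕ) → ℝ)
    (hmem : ∀ n, Memℓp (a n) 2)
    (hwsum : ∀ n, Summable
      (fun γ : ℕ →₀ ℕ => (∑ h ∈ γ.support, (γ h : ℝ) * lam h ^ (-α)) * (a n γ) ^ 2))
    (C : ℝ)
    (hbdd : ∀ n, (∑' γ : ℕ →₀ ℕ, (a n γ) ^ 2)
      + (∑' γ : ℕ →₀ ℕ, (∑ h ∈ γ.support, (γ h : ℝ) * lam h ^ (-α)) * (a n γ) ^ 2) ≤ C) :
    ∃ b : (ℕ →₀ ℕ) → ℝ, Memℓp b 2 ∧ ∃ s : ℕ → ℕ, StrictMono s ∧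
      Tendsto (fun n => ∑' γ : ℕ →₀ ℕ, (a (s n) γ - b γ) ^ 2) atTop (nhds 0) := by
  classical
  set w : (ℕ →₀ ℕ) → ℝ := fun γ => ∑ h ∈ γ.support, (γ h : ℝ) * lam h ^ (-α) with hwdef
  have hw0 : ∀ γ, 0 ≤ w γ := fun γ => Finset.sum_nonneg fun h _ =>
    mul_nonneg (Nat.cast_nonneg _) (Real.rpow_nonneg (hlampos h).le _)
  have hnorm_sq : ∀ x : ℝ, ‖x‖ ^ (2 : ENNReal).toReal = x ^ 2 := by
    intro x
    rw [ENNReal.toReal_ofNat, show ((2:ℝ)) = ((2:ℕ):ℝ) by norm_num, Real.rpow_natCast,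
      Real.norm_eq_abs, sq_abs]
  have hsq : ∀ n, Summable (fun γ => (a n γ) ^ 2) := by
    intro n
    have h := (hmem n).summable (by norm_num)
    exact h.congr fun γ => hnorm_sq _
  have htsC : ∀ n, (∑' γ : ℕ →₀ ℕ, (a n γ) ^ 2) ≤ C := by
    intro n
    have h2 : 0 ≤ ∑' γ : ℕ →₀ ℕ, w γ * (a n γ) ^ 2 :=
      tsum_nonneg fun γ => mul_nonneg (hw0 γ) (sq_nonneg _)
    linarith [hbdd n]
  have hwtC : ∀ n, (∑' γ : ℕ →₀ ℕ, w γ * (a n γ) ^ 2) ≤ C := by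
    intro n
    have h1 : 0 ≤ ∑' γ : ℕ →₀ ℕ, (a n γ) ^ 2 := tsum_nonneg fun γ => sq_nonneg _
    linarith [hbdd n]
  have hC0 : 0 ≤ C := le_trans (tsum_nonneg fun γ => sq_nonneg (a 0 γ)) (htsC 0)
  -- pointwise bound and compactness extraction
  have hmemK : ∀ n, a n ∈ Set.univ.pi (fun _ : (ℕ →₀ ℕ) => Set.Icc (-Real.sqrt C) (Real.sqrt C)) := by
    intro n
    rw [Set.mem_univ_pi]
    intro γ
    have h1 : (a n γ) ^ 2 ≤ C :=
      le_trans (Summable.le_tsum (hsq n) γ fun j _ => sq_nonneg _) (htsC n)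
    have := Real.abs_le_sqrt h1
    exact abs_le.mp this
  obtain ⟨b, -, s, hs, hconv⟩ :=
    (isCompact_univ_pi (fun _ : (ℕ →₀ ℕ) => isCompact_Icc)).tendsto_subseq hmemK
  have hptconv : ∀ γ, Tendsto (fun n => a (s n) γ) atTop (nhds (b γ)) := by
    rw [tendsto_pi_nhds] at hconv
    exact fun γ => hconv γ
  -- tail estimates
  have tailA : ∀ N : ℝ, 0 < N → ∀ n, ∀ t : Finset (ℕ →₀ ℕ), (∀ γ ∈ t, N < w γ) →
      ∑ γ ∈ t, (a n γ) ^ 2 ≤ C / N := by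
    intro N hN n t ht
    rw [le_div_iff₀ hN, mul_comm]
    calc N * ∑ γ ∈ t, (a n γ) ^ 2 = ∑ γ ∈ t, N * (a n γ) ^ 2 := Finset.mul_sum _ _ _
    _ ≤ ∑ γ ∈ t, w γ * (a n γ) ^ 2 := Finset.sum_le_sum fun γ hγ =>
        mul_le_mul_of_nonneg_right (ht γ hγ).le (sq_nonneg _)
    _ ≤ ∑' γ : ℕ →₀ ℕ, w γ * (a n γ) ^ 2 :=
        Summable.sum_le_tsum t (fun γ _ => mul_nonneg (hw0 γ) (sq_nonneg _)) (hwsum n)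
    _ ≤ C := hwtC n
  have hblim : ∀ t : Finset (ℕ →₀ ℕ),
      Tendsto (fun n => ∑ γ ∈ t, (a (s n) γ) ^ 2) atTop (nhds (∑ γ ∈ t, (b γ) ^ 2)) :=
    fun t => tendsto_finset_sum t fun γ _ => (hptconv γ).pow 2
  have tailB : ∀ N : ℝ, 0 < N → ∀ t : Finset (ℕ →₀ ℕ), (∀ γ ∈ t, N < w γ) →
      ∑ γ ∈ t, (b γ) ^ 2 ≤ C / N := by
    intro N hN t ht
    apply le_of_tendsto (hblim t)
    exact Eventually.of_forall fun n => tailA N hN (s n) t ht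
  have hbsum : Summable (fun γ => (b γ) ^ 2) := by
    apply summable_of_sum_le (fun γ => sq_nonneg _)
    intro t
    refine le_of_tendsto (b := C) (hblim t) (Eventually.of_forall fun n => ?_)
    exact le_trans (Summable.sum_le_tsum t (fun γ _ => sq_nonneg _) (hsq (s n))) (htsC (s n))
  refine ⟨b, memℓp_gen ((hbsum.congr fun γ => (hnorm_sq _).symm)), s, hs, ?_⟩
  -- summability of differences
  have hdsum : ∀ n, Summable (fun γ => (a (s n) γ - b γ) ^ 2) := by
    intro n
    refine Summable.of_nonneg_of_le (fun γ => sq_nonneg _) (fun γ => ?_)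
      (((hsq (s n)).mul_left 2).add (hbsum.mul_left 2))
    nlinarith [sq_nonneg (a (s n) γ + b γ)]
  rw [Metric.tendsto_atTop]
  intro ε hε
  set N : ℝ := (8 * C + 8) / ε with hNdef
  have hN : 0 < N := div_pos (by linarith) hε
  have hCN : C / N ≤ ε / 8 := by
    rw [div_le_iff₀ hN]
    have : ε / 8 * N = C + 1 := by
      rw [hNdef]; field_simp
    rw [this]; linarith
  have hfin := finite_low_weight lam hlampos hlam0 α hα N
  set F : Finset (ℕ →₀ ℕ) := hfin.toFinset with hF
  have hFc : ∀ γ : ℕ →₀ ℕ, γ ∉ F → N < w γ := by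
    intro γ hγ
    rw [hF, Set.Finite.mem_toFinset] at hγ
    exact lt_of_not_ge hγ
  -- tail bound for the difference
  have htail : ∀ n, ∑' γ : ↑((↑F : Set (ℕ →₀ ℕ))ᶜ), (a (s n) (↑γ) - b (↑γ)) ^ 2 ≤ 4 * (C / N) := by
    intro n
    apply Summable.tsum_le_of_sum_le ((hdsum n).subtype _)
    intro u
    set t : Finset (ℕ →₀ ℕ) := u.map (Function.Embedding.subtype _) with htdef
    simp only [Function.comp_apply]
    have hEq : ∑ x ∈ u, (a (s n) ↑x - b ↑x) ^ 2 = ∑ γ ∈ t, (a (s n) γ - b γ) ^ 2 := by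
      rw [htdef, Finset.sum_map]
      simp [Function.Embedding.coe_subtype]
    rw [hEq]
    have htW : ∀ γ ∈ t, N < w γ := by
      intro γ hγ
      rw [htdef, Finset.mem_map] at hγ
      obtain ⟨⟨γ', hγ'⟩, -, rfl⟩ := hγ
      exact hFc _ (by simpa using hγ')
    calc ∑ γ ∈ t, (a (s n) γ - b γ) ^ 2
        ≤ ∑ γ ∈ t, (2 * (a (s n) γ) ^ 2 + 2 * (b γ) ^ 2) := by
          apply Finset.sum_le_sum
          intro γ _
          nlinarith [sq_nonneg (a (s n) γ + b γ)]
    _ = 2 * ∑ γ ∈ t, (a (s n) γ) ^ 2 + 2 * ∑ γ ∈ t, (b γ) ^ 2 := by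
          rw [Finset.sum_add_distrib, Finset.mul_sum, Finset.mul_sum]
    _ ≤ 2 * (C / N) + 2 * (C / N) := by
          have h1 := tailA N hN (s n) t htW
          have h2 := tailB N hN t htW
          linarith
    _ = 4 * (C / N) := by ring
  -- finite part tends to 0
  have hfs : Tendsto (fun n => ∑ γ ∈ F, (a (s n) γ - b γ) ^ 2) atTop (nhds 0) := by
    have h := tendsto_finset_sum F (f := fun γ n => (a (s n) γ - b γ) ^ 2)
      (a := fun _ => (0:ℝ)) (fun γ _ => by
        have := ((hptconv γ).sub (tendsto_const_nhds (x := b γ))).pow 2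
        simpa using this)
    simpa using h
  obtain ⟨M, hM⟩ := (Metric.tendsto_atTop.mp hfs) (ε / 4) (by linarith)
  refine ⟨M, fun n hn => ?_⟩
  have hT0 : 0 ≤ ∑' γ : ℕ →₀ ℕ, (a (s n) γ - b γ) ^ 2 := tsum_nonneg fun γ => sq_nonneg _
  rw [Real.dist_eq, sub_zero, abs_of_nonneg hT0]
  have hsplit := Summable.sum_add_tsum_compl (s := F) (hdsum n)
  have hfsb : ∑ γ ∈ F, (a (s n) γ - b γ) ^ 2 < ε / 4 := by
    have := hM n hn
    rw [Real.dist_eq, sub_zero] at this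
    exact lt_of_abs_lt this
  have := htail n
  nlinarith [hsplit]
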